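/- arXiv:math/0405108 — 3 statements merged into one kernel-verified Lean document; each statement's English description precedes it below -/
import Mathlib

section
/- In the complex group algebra of the free group on N generators (N ≥ 1), the sum X_1 of all 2N group elements of reduced word length 1 satisfies X_1 · X_1 = X_2 + 2N · e, where X_2 is the sum of all group elements of reduced word length 2 and e is the identity of the algebra. -/
/-- `Xop N n` is the sum, in the complex group algebra of the free group on `N`
generators, of all group elements of reduced word length `n`. -/
noncomputable def Xop (N n : ℕ) : MonoidAlgebra ℂ (FreeGroup (Fin N)) :=
  ∑ᶠ w ∈ {w : FreeGroup (Fin N) | FreeGroup.norm w = n},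
    MonoidAlgebra.of ℂ (FreeGroup (Fin N)) w

/-- The generating operator `G = g₁ + ... + g_N + g₁⁻¹ + ... + g_N⁻¹`. -/
noncomputable def genOp (N : ℕ) : MonoidAlgebra ℂ (FreeGroup (Fin N)) :=
  ∑ i : Fin N, (MonoidAlgebra.of ℂ (FreeGroup (Fin N)) (FreeGroup.of i)
    + MonoidAlgebra.of ℂ (FreeGroup (Fin N)) ((FreeGroup.of i)⁻¹))

/-- The canonical trace `τ`, the coefficient at the identity. -/
noncomputable def tr (N : ℕ) (f : MonoidAlgebra ℂ (FreeGroup (Fin N))) : ℂ := f.coeff 1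

section Aux

variable {N : ℕ}

/-- The single-letter group element. -/
noncomputable def sg (N : ℕ) (p : Fin N × Bool) : FreeGroup (Fin N) :=
  FreeGroup.mk [p]

lemma toWord_sg (p : Fin N × Bool) : (sg N p).toWord = [p] := by
  rw [sg, FreeGroup.toWord_mk, FreeGroup.reduce_singleton]

lemma sg_inj : Function.Injective (sg N) := by
  intro p q h
  have := congrArg FreeGroup.toWord h
  rw [toWord_sg, toWord_sg] at this
  exact (List.cons.injEq _ _ _ _ ▸ this).1

lemma norm1_set : {w : FreeGroup (Fin N) | FreeGroup.norm w = 1} = Set.range (sg N) := by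
  ext w
  simp only [Set.mem_setOf_eq, Set.mem_range]
  constructor
  · intro hw
    have hw' : w.toWord.length = 1 := hw
    obtain ⟨p, hp⟩ := List.length_eq_one_iff.mp hw'
    exact ⟨p, by rw [sg, ← hp, FreeGroup.mk_toWord]⟩
  · rintro ⟨p, rfl⟩
    show (sg N p).toWord.length = 1
    rw [toWord_sg]; rfl

lemma reduce_pair (p q : Fin N × Bool) :
    FreeGroup.reduce [p, q] =
      if p.1 = q.1 ∧ p.2 = !q.2 then [] else [p, q] := rfl

lemma norm2_set :
    {w : FreeGroup (Fin N) | FreeGroup.norm w = 2} =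
      (fun pq : (Fin N × Bool) × (Fin N × Bool) => FreeGroup.mk [pq.1, pq.2]) ''
        {pq | ¬(pq.1.1 = pq.2.1 ∧ pq.1.2 = !pq.2.2)} := by
  ext w
  simp only [Set.mem_setOf_eq, Set.mem_image]
  constructor
  · intro hw
    have hw' : w.toWord.length = 2 := hw
    obtain ⟨p, q, hpq⟩ := List.length_eq_two.mp hw'
    have hred : FreeGroup.reduce w.toWord = w.toWord := FreeGroup.reduce_toWord w
    refine ⟨(p, q), ?_, by rw [← hpq, FreeGroup.mk_toWord]⟩
    intro hc
    rw [hpq, reduce_pair, if_pos hc] at hred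
    cases hred
  · rintro ⟨⟨p, q⟩, hpq, rfl⟩
    show (FreeGroup.mk [p, q]).toWord.length = 2
    rw [FreeGroup.toWord_mk, reduce_pair, if_neg hpq]
    rfl

lemma sg_mul_of_cancel (p q : Fin N × Bool) (h : p.1 = q.1 ∧ p.2 = !q.2) :
    sg N p * sg N q = 1 := by
  rw [sg, sg, FreeGroup.mul_mk, List.singleton_append]
  rw [← FreeGroup.toWord_eq_nil_iff, FreeGroup.toWord_mk]
  show FreeGroup.reduce [p, q] = []
  rw [reduce_pair, if_pos h]

lemma pair_injOn :
    Set.InjOn (fun pq : (Fin N × Bool) × (Fin N × Bool) => FreeGroup.mk [pq.1, pq.2])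
      {pq | ¬(pq.1.1 = pq.2.1 ∧ pq.1.2 = !pq.2.2)} := by
  intro pq h pq' h' heq
  have h1 := congrArg FreeGroup.toWord heq
  rw [FreeGroup.toWord_mk, FreeGroup.toWord_mk, reduce_pair, if_neg h,
    reduce_pair, if_neg h'] at h1
  rw [List.cons.injEq, List.cons.injEq] at h1
  exact Prod.ext h1.1 h1.2.1

end Aux

theorem X1_mul_X1 (N : ℕ) (hN : 1 ≤ N) :
    Xop N 1 * Xop N 1 =
      Xop N 2 + (2 * (N : ℂ)) • (1 : MonoidAlgebra ℂ (FreeGroup (Fin N))) := by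
  classical
  set of := MonoidAlgebra.of ℂ (FreeGroup (Fin N)) with hof
  have hX1 : Xop N 1 = ∑ p : Fin N × Bool, of (sg N p) := by
    rw [Xop, norm1_set, finsum_mem_range sg_inj, finsum_eq_sum_of_fintype]
  set C : Finset ((Fin N × Bool) × (Fin N × Bool)) :=
    Finset.univ.filter (fun pq => ¬(pq.1.1 = pq.2.1 ∧ pq.1.2 = !pq.2.2)) with hC
  have hset : {pq : (Fin N × Bool) × (Fin N × Bool) |
      ¬(pq.1.1 = pq.2.1 ∧ pq.1.2 = !pq.2.2)} = ↑C := by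
    ext pq; simp [hC]
  have hX2 : Xop N 2 = ∑ pq ∈ C, of (FreeGroup.mk [pq.1, pq.2]) := by
    rw [Xop, norm2_set, finsum_mem_image pair_injOn, hset, finsum_mem_coe_finset]
  -- expand the product
  have hprod : Xop N 1 * Xop N 1 =
      ∑ pq : (Fin N × Bool) × (Fin N × Bool), of (sg N pq.1 * sg N pq.2) := by
    rw [hX1, Finset.sum_mul_sum]
    conv_rhs => rw [Fintype.sum_prod_type]
    exact Finset.sum_congr rfl fun p _ =>
      Finset.sum_congr rfl fun q _ => (map_mul of _ _).symm
  rw [hprod, ← Finset.sum_filter_add_sum_filter_not Finset.univ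
    (fun pq : (Fin N × Bool) × (Fin N × Bool) => ¬(pq.1.1 = pq.2.1 ∧ pq.1.2 = !pq.2.2))]
  congr 1
  · -- reduced pairs give Xop N 2
    rw [hX2]
    refine Finset.sum_congr rfl fun pq hpq => ?_
    rw [sg, sg, FreeGroup.mul_mk, List.singleton_append]
  · -- cancelling pairs give 2N • 1
    have key : ∑ pq ∈ Finset.univ.filter
        (fun pq : (Fin N × Bool) × (Fin N × Bool) =>
          ¬¬(pq.1.1 = pq.2.1 ∧ pq.1.2 = !pq.2.2)),
        of (sg N pq.1 * sg N pq.2) =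
        ∑ _p : Fin N × Bool, (1 : MonoidAlgebra ℂ (FreeGroup (Fin N))) := by
      refine Finset.sum_nbij' (i := fun pq => pq.1)
        (j := fun p : Fin N × Bool => (p, (p.1, !p.2))) ?_ ?_ ?_ ?_ ?_
      · intro pq _; exact Finset.mem_univ _
      · intro p _
        simp
      · intro pq hpq
        simp only [Finset.mem_filter, Finset.mem_univ, true_and, not_not] at hpq
        obtain ⟨⟨i, b⟩, ⟨j, c⟩⟩ := pq
        obtain ⟨h1, h2⟩ := hpq
        simp only at h1 h2
        subst h1
        cases b <;> cases c <;> simp_all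
      · intro p _; rfl
      · intro pq hpq
        simp only [Finset.mem_filter, Finset.mem_univ, true_and, not_not] at hpq
        rw [sg_mul_of_cancel pq.1 pq.2 hpq, map_one]
    rw [key, Finset.sum_const, Finset.card_univ]
    simp only [Fintype.card_prod, Fintype.card_fin, Fintype.card_bool]
    rw [← Nat.cast_smul_eq_nsmul ℂ]
    push_cast
    ring_nf
end

section
/- Let G = X_1 be the generating operator of the complex group algebra of the free group on N generators (N ≥ 1). Define coefficients c : ℕ → ℕ → ℂ by c 0 0 = 1, c 0 j = 0 for j ≥ 1, c (n+1) 0 = 2N · c n 1, and c (n+1) j = c n (j−1) + (2N − 1) · c n (j+1) for j ≥ 1. Then for every n ≥ 0, G^n = Σ_{j=0}^{n} c n j · X_j, where X_j is the sum of all group elements of reduced word length j (X_0 = e). -/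
namespace GenOpAux

lemma norm_letter_mul {N : ℕ} (p : Fin N × Bool) (w : FreeGroup (Fin N)) :
    FreeGroup.norm (FreeGroup.mk [p] * w) =
      if w.toWord.head? = some (p.1, !p.2) then FreeGroup.norm w - 1
      else FreeGroup.norm w + 1 := by
  conv_lhs => rw [← FreeGroup.mk_toWord (x := w)]
  rw [FreeGroup.mul_mk]
  show (FreeGroup.mk (p :: w.toWord)).toWord.length = _
  rw [FreeGroup.toWord_mk, FreeGroup.reduce.cons, FreeGroup.reduce_toWord]
  rcases h : w.toWord with _ | ⟨hd, tl⟩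
  · simp [FreeGroup.norm, h]
  · obtain ⟨a, b⟩ := p; obtain ⟨x, y⟩ := hd
    simp only [List.head?, FreeGroup.norm, h, Option.some.injEq, Prod.mk.injEq]
    by_cases hc : a = x ∧ b = !y
    · obtain ⟨rfl, rfl⟩ := hc
      simp
    · rw [if_neg hc, if_neg]
      · simp
      · rintro ⟨rfl, rfl⟩; exact hc ⟨rfl, by simp⟩

lemma sphere_finite (N n : ℕ) :
    {w : FreeGroup (Fin N) | FreeGroup.norm w = n}.Finite := by
  have : {w : FreeGroup (Fin N) | FreeGroup.norm w = n} =
      FreeGroup.toWord ⁻¹' {L | L.length = n} := rfl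
  rw [this]
  exact (List.finite_length_eq _ n).preimage FreeGroup.toWord_injective.injOn

lemma Xop_apply (N n : ℕ) (w : FreeGroup (Fin N)) :
    (Xop N n).coeff w = if FreeGroup.norm w = n then 1 else 0 := by
  have h : {w : FreeGroup (Fin N) | FreeGroup.norm w = n} =
      (((sphere_finite N n).toFinset : Finset _) : Set _) := by simp
  rw [Xop, h, finsum_mem_coe_finset]
  rw [MonoidAlgebra.coeff_sum, Finset.sum_apply']
  simp only [MonoidAlgebra.of_apply, MonoidAlgebra.coeff_single, Finsupp.single_apply]
  rw [Finset.sum_ite_eq' (sphere_finite N n).toFinset w (fun _ => (1:ℂ))]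
  simp [eq_comm]

lemma of_eq_mk {N : ℕ} (i : Fin N) : FreeGroup.of i = FreeGroup.mk [(i, true)] := rfl

lemma inv_of_eq_mk {N : ℕ} (i : Fin N) :
    (FreeGroup.of i)⁻¹ = FreeGroup.mk [(i, false)] := by
  rw [of_eq_mk, FreeGroup.inv_mk]
  simp [FreeGroup.invRev]

lemma genOp_mul_apply {N : ℕ} (f : MonoidAlgebra ℂ (FreeGroup (Fin N)))
    (w : FreeGroup (Fin N)) :
    (genOp N * f).coeff w = ∑ p : Fin N × Bool, f.coeff (FreeGroup.mk [p] * w) := by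
  rw [genOp, Finset.sum_mul, MonoidAlgebra.coeff_sum, Finset.sum_apply']
  rw [Fintype.sum_prod_type]
  refine Finset.sum_congr rfl fun i _ => ?_
  rw [add_mul, MonoidAlgebra.coeff_add, Finsupp.add_apply]
  simp only [MonoidAlgebra.of_apply, MonoidAlgebra.single_mul_apply, one_mul]
  rw [Fintype.sum_bool]
  have h1 : ((FreeGroup.mk [(i, false)]) : FreeGroup (Fin N))⁻¹ = FreeGroup.mk [(i, true)] := by
    rw [FreeGroup.inv_mk]; simp [FreeGroup.invRev]
  rw [inv_of_eq_mk, h1, add_comm]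

lemma card_letters (N : ℕ) :
    (Finset.univ : Finset (Fin N × Bool)).card = 2 * N := by
  simp [Finset.card_univ, mul_comm]

section

variable {N : ℕ} (c : ℕ → ℕ → ℂ)
    (h00 : c 0 0 = 1)
    (h0j : ∀ j, 1 ≤ j → c 0 j = 0)
    (hrec0 : ∀ n, c (n + 1) 0 = 2 * (N : ℂ) * c n 1)
    (hrec : ∀ n j, 1 ≤ j → c (n + 1) j = c n (j - 1) + (2 * (N : ℂ) - 1) * c n (j + 1))

include h0j hrec in
lemma c_vanish : ∀ n j, n < j → c n j = 0 := by
  intro n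
  induction n with
  | zero => intro j hj; exact h0j j hj
  | succ n ih =>
      intro j hj
      rw [hrec n j (by omega), ih (j - 1) (by omega), ih (j + 1) (by omega)]
      ring

include h00 h0j hrec0 hrec in
lemma coeff_eq : ∀ n (w : FreeGroup (Fin N)),
    (genOp N ^ n).coeff w = c n (FreeGroup.norm w) := by
  intro n
  induction n with
  | zero =>
      intro w
      rw [pow_zero, MonoidAlgebra.one_def, MonoidAlgebra.coeff_single, Finsupp.single_apply]
      by_cases hw : w = 1
      · subst hw; simp [FreeGroup.norm_one, h00]
      · have h1 : 1 ≤ FreeGroup.norm w := by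
          rcases Nat.eq_zero_or_pos (FreeGroup.norm w) with h | h
          · exact absurd (FreeGroup.norm_eq_zero.mp h) hw
          · exact h
        rw [if_neg (fun h => hw h.symm), h0j _ h1]
  | succ n ih =>
      intro w
      rw [pow_succ', genOp_mul_apply]
      simp only [ih, norm_letter_mul, apply_ite (c n)]
      by_cases hw : w = 1
      · subst hw
        simp only [FreeGroup.toWord_one, List.head?, FreeGroup.norm_one,
          reduceCtorEq, if_false, zero_add]
        rw [Finset.sum_const, card_letters, hrec0, nsmul_eq_mul]
        push_cast
        ring
      · have hnil : w.toWord ≠ [] := by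
          intro h
          exact hw (FreeGroup.toWord_injective (by simp [h, FreeGroup.toWord_one]))
        obtain ⟨⟨x, y⟩, tl, h⟩ := List.exists_cons_of_ne_nil hnil
        have hm : 1 ≤ FreeGroup.norm w := by
          rcases Nat.eq_zero_or_pos (FreeGroup.norm w) with h0 | h0
          · exact absurd (FreeGroup.norm_eq_zero.mp h0) hw
          · exact h0
        have key : ∀ p : Fin N × Bool,
            (if w.toWord.head? = some (p.1, !p.2) then c n (FreeGroup.norm w - 1)
              else c n (FreeGroup.norm w + 1)) =
            c n (FreeGroup.norm w + 1) +
              (if p = (x, !y) then c n (FreeGroup.norm w - 1) - c n (FreeGroup.norm w + 1)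
                else 0) := by
          intro ⟨a, b⟩
          have hcond : (w.toWord.head? = some (a, !b)) ↔ ((a, b) = (x, !y)) := by
            rw [h]
            simp only [List.head?, Option.some.injEq, Prod.mk.injEq]
            cases b <;> cases y <;> simp [eq_comm, and_comm]
          by_cases hp : (a, b) = (x, !y)
          · rw [if_pos (hcond.mpr hp), if_pos hp]; ring
          · rw [if_neg (fun hh => hp (hcond.mp hh)), if_neg hp]; ring
        rw [Finset.sum_congr rfl (fun p _ => key p), Finset.sum_add_distrib,
          Finset.sum_const, card_letters,
          Finset.sum_ite_eq' Finset.univ ((x, !y) : Fin N × Bool)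
            (fun _ => c n (FreeGroup.norm w - 1) - c n (FreeGroup.norm w + 1)),
          if_pos (Finset.mem_univ _), nsmul_eq_mul,
          hrec n (FreeGroup.norm w) hm]
        push_cast
        ring

end

end GenOpAux

theorem genOp_pow_eq_sum (N : ℕ) (hN : 1 ≤ N) (c : ℕ → ℕ → ℂ)
    (h00 : c 0 0 = 1)
    (h0j : ∀ j, 1 ≤ j → c 0 j = 0)
    (hrec0 : ∀ n, c (n + 1) 0 = 2 * (N : ℂ) * c n 1)
    (hrec : ∀ n j, 1 ≤ j → c (n + 1) j = c n (j - 1) + (2 * (N : ℂ) - 1) * c n (j + 1)) :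
    ∀ n : ℕ, genOp N ^ n = ∑ j ∈ Finset.range (n + 1), c n j • Xop N j := by
  intro n
  ext w
  rw [GenOpAux.coeff_eq c h00 h0j hrec0 hrec n w, MonoidAlgebra.coeff_sum, Finset.sum_apply']
  have hsmul : ∀ k, (c n k • Xop N k).coeff w = c n k * (Xop N k).coeff w := fun k => rfl
  rw [Finset.sum_congr rfl (fun k _ => hsmul k)]
  simp only [GenOpAux.Xop_apply, mul_ite, mul_one, mul_zero]
  have : ∀ j ∈ Finset.range (n + 1),
      (if FreeGroup.norm w = j then c n j else 0) =
      (if j = FreeGroup.norm w then c n (FreeGroup.norm w) else 0) := by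
    intro j _
    by_cases hj : FreeGroup.norm w = j
    · subst hj; simp
    · rw [if_neg hj, if_neg (fun hh => hj hh.symm)]
  rw [Finset.sum_congr rfl this, Finset.sum_ite_eq' (Finset.range (n + 1))]
  by_cases hm : FreeGroup.norm w ∈ Finset.range (n + 1)
  · rw [if_pos hm]
  · rw [if_neg hm, GenOpAux.c_vanish c h0j hrec n _ (by simpa using hm)]
end

section
/- Let G be the generating operator of the complex group algebra of the free group on N generators (N ≥ 1) and let τ be the canonical trace (the coefficient at the identity e). Define c : ℕ → ℕ → ℂ by c 0 0 = 1, c 0 j = 0 for j ≥ 1, c (n+1) 0 = 2N · c n 1, and c (n+1) j = c n (j−1) + (2N − 1) · c n (j+1) for j ≥ 1. Then for every n ≥ 1, τ(G^n) = 0 if n is odd, and τ(G^n) = c n 0 if n is even. -/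
/-- Norm of a letter times a word, when the word is nonempty. -/
lemma norm_letter_mul {N : ℕ} (x : Fin N × Bool) (w : FreeGroup (Fin N))
    (hd : Fin N × Bool) (tl : List (Fin N × Bool)) (h : w.toWord = hd :: tl) :
    FreeGroup.norm (FreeGroup.mk [x] * w) =
      if x = (hd.1, !hd.2) then tl.length else tl.length + 2 := by
  conv_lhs => rw [← FreeGroup.mk_toWord (x := w)]
  rw [FreeGroup.mul_mk]
  have : ([x] ++ w.toWord : List (Fin N × Bool)) = x :: w.toWord := rfl
  rw [this, FreeGroup.norm, FreeGroup.toWord_mk, FreeGroup.reduce.cons,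
    FreeGroup.reduce_toWord, h]
  by_cases hx : x = (hd.1, !hd.2)
  · have : x.1 = hd.1 ∧ x.2 = !hd.2 := by rw [hx]; exact ⟨rfl, rfl⟩
    simp [this, hx]
  · have : ¬(x.1 = hd.1 ∧ x.2 = !hd.2) := by
      intro ⟨h1, h2⟩; exact hx (Prod.ext h1 h2)
    simp [this, hx]

lemma norm_letter {N : ℕ} (x : Fin N × Bool) :
    FreeGroup.norm (FreeGroup.mk [x]) = 1 := by
  rw [FreeGroup.norm, FreeGroup.toWord_mk, FreeGroup.reduce_singleton]
  rfl

lemma genOp_coeff (N : ℕ) (c : ℕ → ℕ → ℂ)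
    (h00 : c 0 0 = 1)
    (h0j : ∀ j, 1 ≤ j → c 0 j = 0)
    (hrec0 : ∀ n, c (n + 1) 0 = 2 * (N : ℂ) * c n 1)
    (hrec : ∀ n j, 1 ≤ j → c (n + 1) j = c n (j - 1) + (2 * (N : ℂ) - 1) * c n (j + 1)) :
    ∀ n : ℕ, ∀ w : FreeGroup (Fin N), (genOp N ^ n).coeff w = c n (FreeGroup.norm w) := by
  intro n
  induction n with
  | zero =>
    intro w
    rw [pow_zero, MonoidAlgebra.one_def]
    by_cases hw : w = 1
    · subst hw
      simp [Finsupp.single_apply, FreeGroup.norm_one, h00]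
    · rw [MonoidAlgebra.coeff_single_apply, if_neg (fun h => hw h.symm)]
      have : 1 ≤ FreeGroup.norm w := by
        rcases Nat.eq_zero_or_pos (FreeGroup.norm w) with h | h
        · exact absurd (FreeGroup.norm_eq_zero.mp h) hw
        · exact h
      rw [h0j _ this]
  | succ n ih =>
    intro w
    have key : (genOp N ^ (n + 1)).coeff w
        = ∑ p : Fin N × Bool, (genOp N ^ n).coeff (FreeGroup.mk [p] * w) := by
      rw [pow_succ', genOp, Finset.sum_mul, MonoidAlgebra.coeff_sum, Finsupp.finset_sum_apply]
      rw [Fintype.sum_prod_type]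
      apply Finset.sum_congr rfl
      intro i _
      have e1 : (FreeGroup.of i)⁻¹ = FreeGroup.mk [(i, false)] := by
        rw [FreeGroup.of, FreeGroup.inv_mk]; rfl
      have e2 : FreeGroup.of i = FreeGroup.mk [(i, true)] := rfl
      have e3 : (FreeGroup.mk [(i, false)] : FreeGroup (Fin N))⁻¹
          = FreeGroup.mk [(i, true)] := by
        rw [FreeGroup.inv_mk]; rfl
      rw [add_mul, MonoidAlgebra.coeff_add, Finsupp.add_apply, MonoidAlgebra.of_apply, MonoidAlgebra.of_apply,
        MonoidAlgebra.coeff_single_mul_apply, MonoidAlgebra.coeff_single_mul_apply,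
        one_mul, one_mul, Fintype.sum_bool, inv_inv, e1, e2]
      ring
    rw [key]
    rcases h : w.toWord with _ | ⟨hd, tl⟩
    · -- w = 1
      have hw : w = 1 := FreeGroup.toWord_eq_nil_iff.mp h
      subst hw
      have : ∀ p : Fin N × Bool, (genOp N ^ n).coeff (FreeGroup.mk [p] * 1) = c n 1 := by
        intro p; rw [mul_one, ih, norm_letter]
      rw [Finset.sum_congr rfl fun p _ => this p, Finset.sum_const]
      simp only [Finset.card_univ, Fintype.card_prod, Fintype.card_fin, Fintype.card_bool,
        FreeGroup.norm_one, hrec0, nsmul_eq_mul]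
      push_cast
      ring
    · -- w has reduced word hd :: tl
      have hnorm : FreeGroup.norm w = tl.length + 1 := by
        rw [FreeGroup.norm, h]; rfl
      have step : ∀ p : Fin N × Bool, (genOp N ^ n).coeff (FreeGroup.mk [p] * w)
          = (if p = (hd.1, !hd.2) then c n tl.length - c n (tl.length + 2) else 0)
            + c n (tl.length + 2) := by
        intro p
        rw [ih, norm_letter_mul p w hd tl h]
        by_cases hp : p = (hd.1, !hd.2) <;> simp [hp]
      rw [Finset.sum_congr rfl fun p _ => step p, Finset.sum_add_distrib,
        Finset.sum_ite_eq' Finset.univ ((hd.1, !hd.2) : Fin N × Bool), Finset.sum_const]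
      simp only [Finset.mem_univ, if_true, Finset.card_univ, Fintype.card_prod,
        Fintype.card_fin, Fintype.card_bool, nsmul_eq_mul, hnorm]
      rw [hrec n (tl.length + 1) (by omega)]
      have : tl.length + 1 - 1 = tl.length := by omega
      rw [this]
      push_cast
      ring

lemma c_parity (N : ℕ) (c : ℕ → ℕ → ℂ)
    (h0j : ∀ j, 1 ≤ j → c 0 j = 0)
    (hrec0 : ∀ n, c (n + 1) 0 = 2 * (N : ℂ) * c n 1)
    (hrec : ∀ n j, 1 ≤ j → c (n + 1) j = c n (j - 1) + (2 * (N : ℂ) - 1) * c n (j + 1)) :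
    ∀ n j : ℕ, (n + j) % 2 = 1 → c n j = 0 := by
  intro n
  induction n with
  | zero => intro j hj; exact h0j j (by omega)
  | succ n ih =>
    intro j hj
    rcases j with _ | k
    · rw [hrec0, ih 1 (by omega), mul_zero]
    · rw [hrec n (k + 1) (by omega)]
      have h1 : k + 1 - 1 = k := by omega
      rw [h1, ih k (by omega), ih (k + 1 + 1) (by omega), mul_zero, add_zero]

theorem trace_genOp_pow (N : ℕ) (hN : 1 ≤ N) (c : ℕ → ℕ → ℂ)
    (h00 : c 0 0 = 1)
    (h0j : ∀ j, 1 ≤ j → c 0 j = 0)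
    (hrec0 : ∀ n, c (n + 1) 0 = 2 * (N : ℂ) * c n 1)
    (hrec : ∀ n j, 1 ≤ j → c (n + 1) j = c n (j - 1) + (2 * (N : ℂ) - 1) * c n (j + 1)) :
    ∀ n : ℕ, 1 ≤ n →
      (Odd n → tr N (genOp N ^ n) = 0) ∧ (Even n → tr N (genOp N ^ n) = c n 0) := by
  intro n _
  have hc : tr N (genOp N ^ n) = c n 0 := by
    rw [tr, genOp_coeff N c h00 h0j hrec0 hrec n 1, FreeGroup.norm_one]
  constructor
  · intro hodd
    rw [hc]
    rw [Nat.odd_iff] at hodd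
    exact c_parity N c h0j hrec0 hrec n 0 (by omega)
  · intro _; exact hc
end
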